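/- arXiv:2411.07214 — 3 statements merged into one kernel-verified Lean document; each statement's English description precedes it below -/
import Mathlib

section
/- Let H be a finite hypergraph with unified matrix U(H). Then the sum of the squares of the eigenvalues of U(H) equals 2·Σ_{e ∈ E*(H)} m(e)²·|τ(e)| + Σ_{{v} ∈ E*(H)} m({v})², where the first sum ranges over the distinct edges of H and the second over the distinct loops of H. -/
variable {V : Type} [Fintype V] [DecidableEq V]

/-- A finite hypergraph: a finite vertex set and a multiset of nonempty edges. -/
structure Hypergraph' (V : Type) [Fintype V] [DecidableEq V] where
  verts : Finset V
  edges : Multiset (Finset V)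
  edges_sub : ∀ e ∈ edges, e ⊆ verts
  edges_nonempty : ∀ e ∈ edges, e.Nonempty

open Classical in
/-- `IH H` is `I(H)`: all parts of 2-partitions of edges plus all singletons of `V(H)`. -/
noncomputable def IH (H : Hypergraph' V) : Finset (Finset V) :=
  Finset.univ.filter fun S =>
    (S.Nonempty ∧ ∃ e ∈ H.edges, S ⊂ e) ∨ ∃ v ∈ H.verts, S = {v}

/-- The unified matrix of a hypergraph, indexed by `I(H)`. -/
noncomputable def U (H : Hypergraph' V) : Matrix ↥(IH H) ↥(IH H) ℝ := fun S T =>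
  if (S : Finset V) = (T : Finset V) then
    (if (S : Finset V).card = 1 then (H.edges.count (S : Finset V) : ℝ) else 0)
  else if Disjoint (S : Finset V) (T : Finset V) then
    (H.edges.count ((S : Finset V) ∪ (T : Finset V)) : ℝ)
  else 0

/-- Degree of a vertex: number of edges (with multiplicity) containing it. -/
def deg (H : Hypergraph' V) (v : V) : ℕ := (H.edges.filter (fun e => v ∈ e)).card

/-- Unified degree of a set `S`: number of edges (with multiplicity) containing `S`. -/
def udeg (H : Hypergraph' V) (S : Finset V) : ℕ := (H.edges.filter (fun e => S ⊆ e)).card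

/-- `incl H` = ∂(H): number of edges of cardinality ≥ 2 properly contained in another edge. -/
noncomputable def incl (H : Hypergraph' V) : ℕ :=
  Multiset.card (H.edges.filter (fun e => 2 ≤ e.card ∧ ∃ e' ∈ H.edges, e ⊂ e'))

/-- A hypergraph is simple if it has no multiple edges and no loops. -/
def Simple (H : Hypergraph' V) : Prop :=
  H.edges.Nodup ∧ ∀ e ∈ H.edges, 2 ≤ e.card

/-- `tau S` = τ(S): the set of unordered 2-partitions of `S`. -/
def tau (S : Finset V) : Finset (Finset (Finset V)) :=
  (S.powerset.filter fun A => A.Nonempty ∧ A ⊂ S).image fun A => {A, S \ A}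


open Matrix in
lemma sum_eig_sq {n : Type} [Fintype n] [DecidableEq n] (A : Matrix n n ℝ)
    (hA : A.IsHermitian) : (A * A).trace = ∑ i, hA.eigenvalues i ^ 2 := by
  set W : Matrix n n ℝ := (Matrix.IsHermitian.eigenvectorUnitary hA : Matrix n n ℝ) with hW
  set D : Matrix n n ℝ := diagonal (RCLike.ofReal ∘ hA.eigenvalues) with hD
  have h1 : star W * W = 1 := (Matrix.IsHermitian.eigenvectorUnitary hA).2.1
  have h : A = W * D * star W := hA.spectral_theorem
  have key : A * A = W * (D * D) * star W := by
    rw [h]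
    simp only [Matrix.mul_assoc]
    rw [← Matrix.mul_assoc (star W) W (D * star W), h1, Matrix.one_mul]
  rw [key, Matrix.trace_mul_cycle, ← Matrix.mul_assoc, h1, Matrix.one_mul, hD,
    Matrix.diagonal_mul_diagonal, Matrix.trace_diagonal]
  simp [sq]

set_option maxHeartbeats 1000000 in
lemma tau_card (e : Finset V) :
    (e.powerset.filter fun A => A.Nonempty ∧ A ⊂ e).card = 2 * (tau e).card := by
  classical
  set s := e.powerset.filter fun A => A.Nonempty ∧ A ⊂ e with hs
  have h := Finset.card_eq_sum_card_image (fun A => ({A, e \ A} : Finset (Finset V))) s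
  rw [h]
  have key : ∀ b ∈ s.image (fun A => ({A, e \ A} : Finset (Finset V))),
      (s.filter fun a => ({a, e \ a} : Finset (Finset V)) = b).card = 2 := by
    intro b hb
    obtain ⟨A, hA, rfl⟩ := Finset.mem_image.mp hb
    simp only [hs, Finset.mem_filter, Finset.mem_powerset] at hA
    obtain ⟨hAe, hAne, hAss⟩ := hA
    have hdne : (e \ A).Nonempty := Finset.sdiff_nonempty.mpr hAss.not_subset
    have hAd : A ≠ e \ A := by
      have hd : Disjoint A (e \ A) := Finset.disjoint_sdiff
      intro h
      rw [← h] at hd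
      exact hAne.ne_empty (disjoint_self.mp hd)
    have hds : e \ A ⊂ e := Finset.sdiff_ssubset hAe hAne
    have hmem : e \ A ∈ s := by
      simp only [hs, Finset.mem_filter, Finset.mem_powerset]
      exact ⟨Finset.sdiff_subset, hdne, hds⟩
    have hfilter : (s.filter fun a => ({a, e \ a} : Finset (Finset V)) = {A, e \ A})
        = ({A, e \ A} : Finset (Finset V)) := by
      ext B
      simp only [Finset.mem_filter, Finset.mem_insert, Finset.mem_singleton]
      constructor
      · rintro ⟨hBs, hBeq⟩
        have : B ∈ ({A, e \ A} : Finset (Finset V)) := hBeq ▸ Finset.mem_insert_self _ _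
        simpa using this
      · rintro (rfl | rfl)
        · exact ⟨by simpa [hs, Finset.mem_filter, Finset.mem_powerset] using ⟨hAe, hAne, hAss⟩, rfl⟩
        · refine ⟨hmem, ?_⟩
          rw [Finset.sdiff_sdiff_eq_self hAe, Finset.pair_comm]
    rw [hfilter, Finset.card_pair hAd]
  rw [Finset.sum_congr rfl key, Finset.sum_const, smul_eq_mul, Nat.mul_comm]
  rfl

noncomputable def gent (H : Hypergraph' V) (S T : Finset V) : ℝ :=
  if S = T then (if S.card = 1 then (H.edges.count S : ℝ) else 0)
  else if Disjoint S T then (H.edges.count (S ∪ T) : ℝ) else 0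

lemma mem_IH_nonempty {H : Hypergraph' V} {S : Finset V} (h : S ∈ IH H) : S.Nonempty := by
  simp only [IH, Finset.mem_filter, Finset.mem_univ, true_and] at h
  rcases h with ⟨h, _⟩ | ⟨v, _, rfl⟩
  · exact h
  · exact Finset.singleton_nonempty v

lemma gent_symm (H : Hypergraph' V) (S T : Finset V) : gent H S T = gent H T S := by
  unfold gent
  rcases eq_or_ne S T with rfl | h
  · rfl
  · rw [if_neg h, if_neg h.symm]
    exact if_congr disjoint_comm (by rw [Finset.union_comm]) rfl


set_option maxHeartbeats 1000000 in
theorem main_aux (H : Hypergraph' V) :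
    (U H * U H).trace =
      2 * (∑ e ∈ H.edges.toFinset, (H.edges.count e : ℝ) ^ 2 * ((tau e).card : ℝ)) +
      ∑ e ∈ H.edges.toFinset.filter (fun e => e.card = 1), (H.edges.count e : ℝ) ^ 2 := by
  classical
  have htr : (U H * U H).trace = ∑ S ∈ IH H, ∑ T ∈ IH H, gent H S T * gent H T S := by
    rw [Matrix.trace]
    simp only [Matrix.diag, Matrix.mul_apply]
    rw [← Finset.sum_coe_sort (IH H) (fun S => ∑ T ∈ IH H, gent H S T * gent H T S)]
    refine Finset.sum_congr rfl fun i _ => ?_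
    rw [← Finset.sum_coe_sort (IH H) (fun T => gent H (i : Finset V) T * gent H T (i : Finset V))]
    rfl
  rw [htr]
  rw [Finset.sum_congr rfl fun S _ => Finset.sum_congr rfl fun T _ =>
    (by rw [gent_symm H T S, sq] : gent H S T * gent H T S = (gent H S T) ^ 2)]
  rw [← Finset.sum_product' (s := IH H) (t := IH H) (f := fun S T => (gent H S T) ^ 2)]
  rw [← Finset.sum_filter_add_sum_filter_not ((IH H) ×ˢ (IH H)) (fun p => p.1 = p.2)]
  have hdiag : ∑ p ∈ ((IH H) ×ˢ (IH H)).filter (fun p => p.1 = p.2), (gent H p.1 p.2) ^ 2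
      = ∑ e ∈ H.edges.toFinset.filter (fun e => e.card = 1), (H.edges.count e : ℝ) ^ 2 := by
    have h1 : ∑ p ∈ ((IH H) ×ˢ (IH H)).filter (fun p => p.1 = p.2), (gent H p.1 p.2) ^ 2
        = ∑ S ∈ IH H, (gent H S S) ^ 2 := by
      refine Finset.sum_nbij' (fun p => p.1) (fun S => (S, S)) ?_ ?_ ?_ ?_ ?_
      · intro p hp
        simp only [Finset.mem_filter, Finset.mem_product] at hp
        exact hp.1.1
      · intro S hS
        simp [Finset.mem_filter, Finset.mem_product, hS]
      · rintro ⟨a, b⟩ hp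
        simp only [Finset.mem_filter, Finset.mem_product] at hp
        obtain rfl := hp.2
        rfl
      · intro S _; rfl
      · intro p hp
        simp only [Finset.mem_filter, Finset.mem_product] at hp
        show gent H p.1 p.2 ^ 2 = gent H p.1 p.1 ^ 2
        rw [hp.2]
    rw [h1]
    have h2 : ∀ S : Finset V, (gent H S S) ^ 2
        = if S.card = 1 then (H.edges.count S : ℝ) ^ 2 else 0 := by
      intro S
      unfold gent
      rw [if_pos rfl]
      split_ifs <;> simp
    rw [Finset.sum_congr rfl fun S _ => h2 S, ← Finset.sum_filter]
    refine (Finset.sum_subset ?_ ?_).symm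
    · intro e he
      simp only [Finset.mem_filter, Multiset.mem_toFinset] at he
      obtain ⟨he1, he2⟩ := he
      obtain ⟨v, rfl⟩ := Finset.card_eq_one.mp he2
      simp only [IH, Finset.mem_filter, Finset.mem_univ, true_and]
      exact ⟨Or.inr ⟨v, H.edges_sub _ he1 (Finset.mem_singleton_self v), rfl⟩, he2⟩
    · intro S hS hS2
      simp only [Finset.mem_filter, Multiset.mem_toFinset] at hS hS2
      have : S ∉ H.edges := fun h => hS2 ⟨h, hS.2⟩
      rw [Multiset.count_eq_zero_of_notMem this]
      norm_num
  have hoff : ∑ p ∈ ((IH H) ×ˢ (IH H)).filter (fun p => ¬ p.1 = p.2), (gent H p.1 p.2) ^ 2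
      = 2 * (∑ e ∈ H.edges.toFinset, (H.edges.count e : ℝ) ^ 2 * ((tau e).card : ℝ)) := by
    set Q := (((IH H) ×ˢ (IH H)).filter (fun p => ¬ p.1 = p.2)).filter
      (fun p => Disjoint p.1 p.2 ∧ p.1 ∪ p.2 ∈ H.edges) with hQ
    have h1 : ∑ p ∈ ((IH H) ×ˢ (IH H)).filter (fun p => ¬ p.1 = p.2), (gent H p.1 p.2) ^ 2
        = ∑ p ∈ Q, (gent H p.1 p.2) ^ 2 := by
      refine (Finset.sum_subset (Finset.filter_subset _ _) ?_).symm
      intro p hp hp2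
      simp only [hQ, Finset.mem_filter, not_and] at hp hp2
      unfold gent
      rw [if_neg hp.2]
      by_cases hd : Disjoint p.1 p.2
      · have : p.1 ∪ p.2 ∉ H.edges := hp2 hp hd
        rw [if_pos hd, Multiset.count_eq_zero_of_notMem this]
        norm_num
      · rw [if_neg hd]; norm_num
    have h2 : ∑ p ∈ Q, (gent H p.1 p.2) ^ 2
        = ∑ p ∈ Q, (H.edges.count (p.1 ∪ p.2) : ℝ) ^ 2 := by
      refine Finset.sum_congr rfl fun p hp => ?_
      simp only [hQ, Finset.mem_filter] at hp
      unfold gent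
      rw [if_neg hp.1.2, if_pos hp.2.1]
    have h3 : ∑ p ∈ Q, (H.edges.count (p.1 ∪ p.2) : ℝ) ^ 2
        = ∑ q ∈ H.edges.toFinset.sigma
            (fun e => e.powerset.filter fun A => A.Nonempty ∧ A ⊂ e),
            (H.edges.count q.1 : ℝ) ^ 2 := by
      refine Finset.sum_nbij' (fun p => ⟨p.1 ∪ p.2, p.1⟩) (fun q => (q.2, q.1 \ q.2))
        ?_ ?_ ?_ ?_ ?_
      · intro p hp
        simp only [hQ, Finset.mem_filter, Finset.mem_product] at hp
        obtain ⟨⟨⟨h1', h2'⟩, hne⟩, hd, hmem⟩ := hp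
        have hn2 : p.2.Nonempty := mem_IH_nonempty h2'
        simp only [Finset.mem_sigma, Multiset.mem_toFinset, Finset.mem_filter,
          Finset.mem_powerset]
        refine ⟨hmem, Finset.subset_union_left, mem_IH_nonempty h1', ?_⟩
        refine Finset.ssubset_iff_subset_ne.mpr ⟨Finset.subset_union_left, ?_⟩
        intro heq
        obtain ⟨t, ht⟩ := hn2
        exact (Finset.disjoint_left.mp hd (heq ▸ Finset.mem_union_right _ ht)) ht
      · intro q hq
        simp only [Finset.mem_sigma, Multiset.mem_toFinset, Finset.mem_filter,
          Finset.mem_powerset] at hq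
        obtain ⟨hqe, hsub, hne, hss⟩ := hq
        have hdne : (q.1 \ q.2).Nonempty := Finset.sdiff_nonempty.mpr hss.not_subset
        have hds : q.1 \ q.2 ⊂ q.1 := Finset.sdiff_ssubset hsub hne
        have hAd : q.2 ≠ q.1 \ q.2 := by
          have hd : Disjoint q.2 (q.1 \ q.2) := Finset.disjoint_sdiff
          intro h
          rw [← h] at hd
          exact hne.ne_empty (disjoint_self.mp hd)
        simp only [hQ, Finset.mem_filter, Finset.mem_product, IH, Finset.mem_univ, true_and]
        refine ⟨⟨⟨Or.inl ⟨hne, q.1, hqe, hss⟩, Or.inl ⟨hdne, q.1, hqe, hds⟩⟩, hAd⟩,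
          Finset.disjoint_sdiff, ?_⟩
        rw [Finset.union_sdiff_of_subset hsub]
        exact hqe
      · intro p hp
        simp only [hQ, Finset.mem_filter] at hp
        exact Prod.ext_iff.mpr ⟨rfl, Finset.union_sdiff_cancel_left hp.2.1⟩
      · intro q hq
        simp only [Finset.mem_sigma, Multiset.mem_toFinset, Finset.mem_filter,
          Finset.mem_powerset] at hq
        show (⟨q.2 ∪ (q.1 \ q.2), q.2⟩ : (_ : Finset V) × Finset V) = q
        rw [Finset.union_sdiff_of_subset hq.2.1]
      · intro p _; rfl
    have h4 : ∑ q ∈ H.edges.toFinset.sigma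
            (fun e => e.powerset.filter fun A => A.Nonempty ∧ A ⊂ e),
            (H.edges.count q.1 : ℝ) ^ 2
        = 2 * (∑ e ∈ H.edges.toFinset, (H.edges.count e : ℝ) ^ 2 * ((tau e).card : ℝ)) := by
      rw [Finset.sum_sigma, Finset.mul_sum]
      refine Finset.sum_congr rfl fun e _ => ?_
      rw [Finset.sum_congr rfl fun A _ => (rfl : _ = ((H.edges.count e : ℝ)) ^ 2),
        Finset.sum_const, nsmul_eq_mul, tau_card e]
      push_cast
      ring
    rw [h1, h2, h3, h4]
  rw [hdiag, hoff, add_comm]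

theorem sum_sq_eigenvalues (H : Hypergraph' V) (hU : (U H).IsHermitian) :
    ∑ i, (hU.eigenvalues i) ^ 2 =
      2 * (∑ e ∈ H.edges.toFinset, (H.edges.count e : ℝ) ^ 2 * ((tau e).card : ℝ)) +
      ∑ e ∈ H.edges.toFinset.filter (fun e => e.card = 1), (H.edges.count e : ℝ) ^ 2 := by
  rw [← sum_eig_sq (U H) hU]
  exact main_aux H
end

section
/- Let H be an exactly connected simple hypergraph whose unified matrix U(H) has ℓ distinct eigenvalues. Then the exact diameter of H satisfies ED(H) ≤ ℓ − 1. -/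
variable {V : Type} [Fintype V] [DecidableEq V]

/-- Two parts are adjacent when they form a 2-partition of an edge of `H`. -/
def Adj (H : Hypergraph' V) (S T : Finset V) : Prop :=
  S.Nonempty ∧ T.Nonempty ∧ Disjoint S T ∧ S ∪ T ∈ H.edges

/-- There is an exact path of length `n` joining some `S ∋ u` and `S' ∋ v`. -/
def ExactPathBetween (H : Hypergraph' V) (u v : V) (n : ℕ) : Prop :=
  ∃ l : List (Finset V), l.length = n + 1 ∧ l.Nodup ∧ (∀ S ∈ l, S ∈ IH H) ∧
    l.Chain' (Adj H) ∧ (∃ S, l.head? = some S ∧ u ∈ S) ∧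
    (∃ S, l.getLast? = some S ∧ v ∈ S)


section Spectral

open Polynomial Matrix

noncomputable def q0 (s : Finset ℝ) (d : ℕ) : Polynomial ℝ :=
  Lagrange.interpolate s id (fun μ => μ ^ d)

theorem q0_degree (s : Finset ℝ) (d : ℕ) : (q0 s d).degree < s.card :=
  Lagrange.degree_interpolate_lt _ Function.injective_id.injOn

theorem q0_eval (s : Finset ℝ) (d : ℕ) {x : ℝ} (hx : x ∈ s) : (q0 s d).eval x = x ^ d :=
  Lagrange.eval_interpolate_at_node _ Function.injective_id.injOn hx

noncomputable def conjAlgHom {n : Type} [Fintype n] [DecidableEq n]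
    (e : Matrix n n ℝ) (he1 : e * star e = 1) (he2 : star e * e = 1) :
    Matrix n n ℝ →ₐ[ℝ] Matrix n n ℝ where
  toFun X := e * X * star e
  map_one' := by simp [he1]
  map_mul' X Y := by
    simp only [Matrix.mul_assoc]
    rw [← Matrix.mul_assoc (star e) e, he2, Matrix.one_mul]
  map_zero' := by simp
  map_add' X Y := by simp only [Matrix.mul_add, Matrix.add_mul]
  commutes' r := by
    simp [Algebra.algebraMap_eq_smul_one, Matrix.mul_smul, Matrix.smul_mul, he1]

set_option maxHeartbeats 1000000 in
theorem pow_entry_zero {n : Type} [Fintype n] [DecidableEq n] {M : Matrix n n ℝ}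
    (hM : M.IsHermitian) (d : ℕ) (S T : n)
    (h0 : ∀ k < (Finset.univ.image hM.eigenvalues).card, (M ^ k) S T = 0) :
    (M ^ d) S T = 0 := by
  set s := Finset.univ.image hM.eigenvalues with hs
  set w := hM.eigenvalues with hw
  have hmem : ∀ i, w i ∈ s := fun i => Finset.mem_image_of_mem _ (Finset.mem_univ i)
  have hsne : s.Nonempty := ⟨w S, hmem S⟩
  set q : ℝ[X] := q0 s d with hq
  have hdeg : q.degree < s.card := q0_degree s d
  have hnd : q.natDegree < s.card := by
    rcases eq_or_ne q 0 with h | h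
    · simp [h, Finset.card_pos.mpr hsne]
    · exact (Polynomial.natDegree_lt_iff_degree_lt h).mpr hdeg
  set e : Matrix n n ℝ := (hM.eigenvectorUnitary : Matrix n n ℝ) with he
  have he1 : e * star e = 1 := (Matrix.mem_unitaryGroup_iff).mp hM.eigenvectorUnitary.2
  have he2 : star e * e = 1 := (Matrix.mem_unitaryGroup_iff').mp hM.eigenvectorUnitary.2
  set φ := conjAlgHom e he1 he2 with hφ
  have hspec : M = φ ((Matrix.diagonalAlgHom ℝ) w) := by
    have := hM.spectral_theorem
    rw [RCLike.ofReal_real_eq_id] at this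
    rw [hφ]
    show M = e * Matrix.diagonal w * star e
    simpa using this
  have key : ∀ p : ℝ[X], aeval M p = φ ((Matrix.diagonalAlgHom ℝ) (fun i => p.eval (w i))) := by
    intro p
    rw [hspec, aeval_algHom_apply, aeval_algHom_apply]
    congr 1
    congr 1
    funext i
    simp
  have hMd : M ^ d = aeval M q := by
    have h1 : aeval M (X ^ d : ℝ[X]) = M ^ d := by simp
    rw [← h1, key, key]
    congr 2
    funext i
    rw [hq, q0_eval s d (hmem i)]
    simp
  have hsum : aeval M q = ∑ k ∈ Finset.range s.card, q.coeff k • M ^ k :=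
    Polynomial.aeval_eq_sum_range' hnd M
  rw [hMd, hsum, Matrix.sum_apply]
  apply Finset.sum_eq_zero
  intro k hk
  rw [Matrix.smul_apply, h0 k (Finset.mem_range.mp hk), smul_zero]

end Spectral

lemma singleton_mem_IH {H : Hypergraph' V} {u : V} (hu : u ∈ H.verts) : ({u} : Finset V) ∈ IH H := by
  classical
  rw [IH, Finset.mem_filter]
  exact ⟨Finset.mem_univ _, Or.inr ⟨u, hu, rfl⟩⟩

/-- The exactness graph on `I(H)`. -/
def EG (H : Hypergraph' V) : SimpleGraph ↥(IH H) where
  Adj a b := Adj H (a : Finset V) (b : Finset V)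
  symm := by
    constructor
    rintro a b ⟨h1, h2, h3, h4⟩
    exact ⟨h2, h1, h3.symm, by rwa [Finset.union_comm]⟩
  loopless := by
    constructor
    rintro a ⟨h1, _, h3, _⟩
    exact h1.ne_empty ((Finset.disjoint_self_iff_empty _).mp h3)

lemma U_nonneg (H : Hypergraph' V) (S T : ↥(IH H)) : 0 ≤ U H S T := by
  rw [U]
  split_ifs <;> positivity

lemma U_pow_nonneg (H : Hypergraph' V) (k : ℕ) (S T : ↥(IH H)) : 0 ≤ (U H ^ k) S T := by
  induction k generalizing S T with
  | zero =>
    rw [pow_zero, Matrix.one_apply]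
    split_ifs <;> norm_num
  | succ k ih =>
    rw [pow_succ', Matrix.mul_apply]
    exact Finset.sum_nonneg fun R _ => mul_nonneg (U_nonneg H S R) (ih R T)

lemma adj_of_U_ne_zero {H : Hypergraph' V} (hs : Simple H) {S T : ↥(IH H)}
    (h : U H S T ≠ 0) : (S : Finset V) ≠ (T : Finset V) ∧ Adj H (S : Finset V) (T : Finset V) := by
  rw [U] at h
  split_ifs at h with h1 h2 h3
  · exfalso
    have hmem : (S : Finset V) ∈ H.edges := by
      by_contra hc
      exact h (by rw [Multiset.count_eq_zero_of_notMem hc, Nat.cast_zero])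
    have := hs.2 _ hmem
    omega
  · exact absurd rfl h
  · refine ⟨h1, mem_IH_nonempty S.2, mem_IH_nonempty T.2, h3, ?_⟩
    by_contra hc
    exact h (by rw [Multiset.count_eq_zero_of_notMem hc, Nat.cast_zero])
  · exact absurd rfl h

lemma U_pos_of_adj {H : Hypergraph' V} {S T : ↥(IH H)}
    (h : Adj H (S : Finset V) (T : Finset V)) : 0 < U H S T := by
  obtain ⟨h1, h2, h3, h4⟩ := h
  have hne : (S : Finset V) ≠ (T : Finset V) := by
    intro hc
    rw [hc] at h3 h1
    exact h1.ne_empty ((Finset.disjoint_self_iff_empty _).mp h3)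
  rw [U, if_neg hne, if_pos h3]
  exact_mod_cast Multiset.count_pos.mpr h4

lemma walk_of_pow_ne_zero {H : Hypergraph' V} (hs : Simple H) (k : ℕ) (S T : ↥(IH H))
    (h : (U H ^ k) S T ≠ 0) : ∃ p : (EG H).Walk S T, p.length = k := by
  induction k generalizing S with
  | zero =>
    rw [pow_zero, Matrix.one_apply] at h
    have : S = T := by by_contra hc; rw [if_neg hc] at h; exact h rfl
    subst this
    exact ⟨SimpleGraph.Walk.nil, rfl⟩
  | succ k ih =>
    rw [pow_succ', Matrix.mul_apply] at h
    obtain ⟨R, _, hR⟩ := Finset.exists_ne_zero_of_sum_ne_zero h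
    have h1 : U H S R ≠ 0 := fun hc => hR (by rw [hc, zero_mul])
    have h2 : (U H ^ k) R T ≠ 0 := fun hc => hR (by rw [hc, mul_zero])
    obtain ⟨p, hp⟩ := ih R h2
    exact ⟨SimpleGraph.Walk.cons (show (EG H).Adj S R from (adj_of_U_ne_zero hs h1).2) p, by simp [hp]⟩

lemma pow_pos_of_walk {H : Hypergraph' V} {S T : ↥(IH H)} (p : (EG H).Walk S T) :
    0 < (U H ^ p.length) S T := by
  induction p with
  | nil => simp [Matrix.one_apply]
  | @cons a b c hab p ih =>
    rw [SimpleGraph.Walk.length_cons, pow_succ', Matrix.mul_apply]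
    apply Finset.sum_pos' (fun R _ => mul_nonneg (U_nonneg H a R) (U_pow_nonneg H _ R c))
    exact ⟨b, Finset.mem_univ b, mul_pos (U_pos_of_adj hab) ih⟩

lemma exactPath_of_walk {H : Hypergraph' V} {u v : V} {S T : ↥(IH H)}
    (p : (EG H).Walk S T) (hp : p.IsPath) (hu : u ∈ (S : Finset V)) (hv : v ∈ (T : Finset V)) :
    ExactPathBetween H u v p.length := by
  refine ⟨p.support.map Subtype.val, ?_, ?_, ?_, ?_, ?_, ?_⟩
  · rw [List.length_map, SimpleGraph.Walk.length_support]
  · exact hp.support_nodup.map Subtype.val_injective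
  · intro X hX
    obtain ⟨a, _, rfl⟩ := List.mem_map.mp hX
    exact a.2
  · exact (List.isChain_map Subtype.val).mpr ((p.isChain_adj_support).imp (fun a b hab => hab))
  · refine ⟨(S : Finset V), ?_, hu⟩
    rw [List.head?_map, p.support_eq_cons]
    rfl
  · refine ⟨(T : Finset V), ?_, hv⟩
    rw [List.getLast?_map, List.getLast?_eq_getLast_of_ne_nil p.support_ne_nil, p.getLast_support]
    rfl


lemma walk_of_chain {H : Hypergraph' V} :
    ∀ (l : List ↥(IH H)) (S T : ↥(IH H)), l.head? = some S → l.getLast? = some T →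
      l.Chain' (EG H).Adj → ∃ p : (EG H).Walk S T, p.length + 1 = l.length
  | [], S, T, h1, _, _ => by simp at h1
  | [a], S, T, h1, h2, _ => by
      simp only [List.head?_cons, List.getLast?_singleton, Option.some_inj] at h1 h2
      subst h1; subst h2
      exact ⟨SimpleGraph.Walk.nil, rfl⟩
  | a :: b :: rest, S, T, h1, h2, hc => by
      simp only [List.head?_cons, Option.some_inj] at h1
      subst h1
      replace hc := List.isChain_cons_cons.mp hc
      rw [List.getLast?_cons_cons] at h2
      obtain ⟨p, hp⟩ := walk_of_chain (b :: rest) b T rfl h2 hc.2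
      exact ⟨SimpleGraph.Walk.cons hc.1 p, by simp [← hp]⟩


theorem exact_diameter_le_card_distinct_eigenvalues_sub_one (H : Hypergraph' V)
    (hs : Simple H) (hU : (U H).IsHermitian)
    (hconn : ∀ u ∈ H.verts, ∀ v ∈ H.verts, u ≠ v → ∃ n : ℕ, ExactPathBetween H u v n) :
    ∀ u ∈ H.verts, ∀ v ∈ H.verts, u ≠ v →
      ∃ n ≤ (Finset.univ.image hU.eigenvalues).card - 1, ExactPathBetween H u v n := by
  classical
  intro u hu v hv huv
  have hex := hconn u hu v hv huv
  set L := (Finset.univ.image hU.eigenvalues).card with hL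
  have hd : ExactPathBetween H u v (Nat.find hex) := Nat.find_spec hex
  set d := Nat.find hex with hd'
  by_cases hdl : d ≤ L - 1
  · exact ⟨d, hdl, hd⟩
  exfalso
  obtain ⟨l, hlen, hnd, hmemIH, hch, ⟨S0, hS0, huS0⟩, ⟨T0, hT0, hvT0⟩⟩ := hd
  have hS0IH : S0 ∈ IH H := hmemIH _ (List.mem_of_mem_head? hS0)
  have hT0IH : T0 ∈ IH H := hmemIH _ (List.mem_of_mem_getLast? hT0)
  set S : ↥(IH H) := ⟨S0, hS0IH⟩ with hSdef
  set T : ↥(IH H) := ⟨T0, hT0IH⟩ with hTdef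
  have hL1 : 1 ≤ L :=
    Finset.card_pos.mpr ⟨hU.eigenvalues S, Finset.mem_image_of_mem _ (Finset.mem_univ S)⟩
  set l' : List ↥(IH H) := l.attach.map (fun x => ⟨x.1, hmemIH x.1 x.2⟩) with hl'
  have hmap : l'.map Subtype.val = l := by
    rw [hl', List.map_map]
    simp [Function.comp]
  have hlen' : l'.length = d + 1 := by
    rw [hl', List.length_map, List.length_attach, hlen]
  have hch' : l'.Chain' (EG H).Adj := by
    have h := hch
    rw [← hmap] at h
    have h2 := (List.isChain_map (f := (Subtype.val : ↥(IH H) → Finset V))).mp h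
    exact h2
  have hhd : l'.head? = some S := by
    have h := hS0
    rw [← hmap, List.head?_map] at h
    obtain ⟨a, ha, hav⟩ := Option.map_eq_some_iff.mp h
    rw [ha, Option.some_inj]
    exact Subtype.ext hav
  have hlast : l'.getLast? = some T := by
    have h := hT0
    rw [← hmap, List.getLast?_map] at h
    obtain ⟨a, ha, hav⟩ := Option.map_eq_some_iff.mp h
    rw [ha, Option.some_inj]
    exact Subtype.ext hav
  obtain ⟨p, hp⟩ := walk_of_chain l' S T hhd hlast hch'
  have hplen : p.length = d := by omega
  have hpos : 0 < (U H ^ d) S T := hplen ▸ pow_pos_of_walk p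
  have hzero : ∀ k < L, (U H ^ k) S T = 0 := by
    intro k hk
    by_contra h
    obtain ⟨pw, hpw⟩ := walk_of_pow_ne_zero hs k S T h
    have hpath := exactPath_of_walk pw.bypass pw.bypass_isPath huS0 hvT0
    have hlt : pw.bypass.length < d := by
      have := pw.length_bypass_le
      omega
    rw [hd'] at hlt
    exact Nat.find_min hex hlt hpath
  exact hpos.ne' (pow_entry_zero hU d S T hzero)
end

section
/- Let H be a finite simple hypergraph with e-index k and unified matrix U(H) with largest eigenvalue λ₁(H). Then λ₁(H)² ≤ ((k−1)/k)·((Σ_{S ∈ I(H)} d_H(S)) − ∂(H)). -/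
variable {V : Type} [Fintype V] [DecidableEq V]

open Finset

section Aux
variable {H : Hypergraph' V}

lemma mem_IH {S : Finset V} :
    S ∈ IH H ↔ (S.Nonempty ∧ ∃ e ∈ H.edges, S ⊂ e) ∨ ∃ v ∈ H.verts, S = {v} := by
  classical
  simp [IH]

lemma IH_nonempty {S : Finset V} (hS : S ∈ IH H) : S.Nonempty := by
  rcases mem_IH.mp hS with ⟨h, _⟩ | ⟨v, _, rfl⟩
  · exact h
  · exact Finset.singleton_nonempty v

open Classical in
/-- proper nonempty subsets of `e` -/
noncomputable def Pns (e : Finset V) : Finset (Finset V) :=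
  e.powerset.filter (fun S => S.Nonempty ∧ S ≠ e)

lemma card_Pns {e : Finset V} (he : e.Nonempty) : (Pns e).card = 2 ^ e.card - 2 := by
  classical
  have h1 : Pns e = e.powerset \ {∅, e} := by
    ext S
    simp only [Pns, mem_filter, mem_powerset, mem_sdiff, mem_insert, mem_singleton,
      Finset.nonempty_iff_ne_empty]
    tauto
  have h2 : ({∅, e} : Finset (Finset V)) ⊆ e.powerset := by
    intro S hS
    simp only [mem_insert, mem_singleton] at hS
    rcases hS with rfl | rfl <;> simp
  rw [h1, card_sdiff_of_subset h2, card_powerset]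
  congr 1
  rw [card_insert_of_notMem (by simpa using he.ne_empty.symm), card_singleton]

open Classical in
lemma filter_subset_IH {e : Finset V} (he : e ∈ H.edges) (h2 : 2 ≤ e.card) :
    (IH H).filter (fun S => S ⊆ e) =
      if (∃ e' ∈ H.edges, e ⊂ e') then insert e (Pns e) else Pns e := by
  classical
  ext S
  have hne : e.Nonempty := Finset.card_pos.mp (by omega)
  by_cases hc : ∃ e' ∈ H.edges, e ⊂ e'
  · simp only [hc, if_pos, mem_insert, mem_filter, Pns, mem_powerset, mem_IH]
    constructor
    · rintro ⟨hI, hSe⟩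
      by_cases hSeq : S = e
      · exact Or.inl hSeq
      · exact Or.inr ⟨hSe, IH_nonempty (mem_IH.mpr hI), hSeq⟩
    · rintro (rfl | ⟨hSe, hSne, hSneq⟩)
      · exact ⟨Or.inl ⟨hne, hc⟩, subset_rfl⟩
      · exact ⟨Or.inl ⟨hSne, e, he, ssubset_of_subset_of_ne hSe hSneq⟩, hSe⟩
  · simp only [hc, if_neg, not_false_iff, mem_filter, Pns, mem_powerset, mem_IH]
    constructor
    · rintro ⟨hI, hSe⟩
      refine ⟨hSe, IH_nonempty (mem_IH.mpr hI), ?_⟩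
      rintro rfl
      rcases hI with ⟨_, e', he', hlt⟩ | ⟨v, _, rfl⟩
      · exact hc ⟨e', he', hlt⟩
      · simp at h2
    · rintro ⟨hSe, hSne, hSneq⟩
      exact ⟨Or.inl ⟨hSne, e, he, ssubset_of_subset_of_ne hSe hSneq⟩, hSe⟩

open Classical in
lemma card_filter_subset_IH {e : Finset V} (he : e ∈ H.edges) (h2 : 2 ≤ e.card) :
    ((IH H).filter (fun S => S ⊆ e)).card =
      2 ^ e.card - 2 + (if (∃ e' ∈ H.edges, e ⊂ e') then 1 else 0) := by
  classical
  have hne : e.Nonempty := Finset.card_pos.mp (by omega)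
  rw [filter_subset_IH he h2]
  by_cases hc : ∃ e' ∈ H.edges, e ⊂ e'
  · rw [if_pos hc, if_pos hc, card_insert_of_notMem (by simp [Pns]), card_Pns hne]
  · rw [if_neg hc, if_neg hc, card_Pns hne, add_zero]

end Aux

section Aux2
variable {H : Hypergraph' V}

open Classical in
noncomputable def Qset (H : Hypergraph' V) : Finset (Finset V × Finset V) :=
  ((IH H) ×ˢ (IH H)).filter (fun p => p.1 ≠ p.2 ∧ Disjoint p.1 p.2 ∧ p.1 ∪ p.2 ∈ H.edges)

lemma Qset_eq :
    Qset H = H.edges.toFinset.biUnion (fun e => (Pns e).image (fun S => (S, e \ S))) := by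
  classical
  ext ⟨S, T⟩
  simp only [Qset, mem_filter, mem_product, mem_biUnion, Multiset.mem_toFinset, mem_image,
    Prod.mk.injEq, Pns, mem_powerset]
  constructor
  · rintro ⟨⟨hS, hT⟩, hne, hdisj, hmem⟩
    refine ⟨S ∪ T, hmem, S, ⟨subset_union_left, IH_nonempty hS, ?_⟩, rfl, ?_⟩
    · intro hSeq
      have hTS : T ⊆ S := by rw [hSeq]; exact subset_union_right
      exact (IH_nonempty hT).ne_empty (hdisj.symm.eq_bot_of_le hTS)
    · exact (union_sdiff_cancel_left hdisj)
  · rintro ⟨e, he, S', ⟨hsub, hne', hneq⟩, rfl, rfl⟩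
    have hss : S' ⊂ e := ssubset_of_subset_of_ne hsub hneq
    have hdne : (e \ S').Nonempty := sdiff_nonempty.mpr (fun h => hneq (subset_antisymm hsub h))
    have hdisj : Disjoint S' (e \ S') := disjoint_sdiff
    refine ⟨⟨mem_IH.mpr (Or.inl ⟨hne', e, he, hss⟩),
      mem_IH.mpr (Or.inl ⟨hdne, e, he, sdiff_ssubset hsub hne'⟩)⟩, ?_, hdisj, ?_⟩
    · intro h
      exact hne'.ne_empty (disjoint_self.mp (by rwa [← h] at hdisj))
    · rw [union_sdiff_of_subset hsub]; exact he

lemma card_Qset (hs : Simple H) :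
    (Qset H).card = ∑ e ∈ H.edges.toFinset, (2 ^ e.card - 2) := by
  classical
  rw [Qset_eq, card_biUnion]
  · refine Finset.sum_congr rfl fun e he => ?_
    rw [Finset.card_image_of_injective _ (fun a b h => (Prod.mk.injEq _ _ _ _).mp h |>.1),
      card_Pns (H.edges_nonempty e (Multiset.mem_toFinset.mp he))]
  · intro e he e' he' hne
    rw [Function.onFun, Finset.disjoint_left]
    rintro ⟨S, T⟩ hp hp'
    simp only [mem_image, Pns, mem_filter, mem_powerset, Prod.mk.injEq] at hp hp'
    obtain ⟨A, ⟨hA, _, hAne⟩, rfl, rfl⟩ := hp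
    obtain ⟨A', ⟨hA', _, _⟩, rfl, h2⟩ := hp'
    apply hne
    rw [← union_sdiff_of_subset hA, ← union_sdiff_of_subset hA', h2]

end Aux2

section Aux3
variable {H : Hypergraph' V}

lemma edges_val (hs : Simple H) : H.edges.toFinset.val = H.edges := by
  rw [Multiset.toFinset_val, Multiset.dedup_eq_self.mpr hs.1]

lemma card_multiset_filter (hs : Simple H) (p : Finset V → Prop) [DecidablePred p] :
    Multiset.card (Multiset.filter p H.edges) = (H.edges.toFinset.filter p).card := by
  rw [Finset.card, Finset.filter_val, edges_val hs]

lemma udeg_eq (hs : Simple H) (S : Finset V) :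
    udeg H S = (H.edges.toFinset.filter (fun e => S ⊆ e)).card := by
  rw [udeg, card_multiset_filter hs]

open Classical in
lemma incl_eq (hs : Simple H) :
    incl H = (H.edges.toFinset.filter (fun e => ∃ e' ∈ H.edges, e ⊂ e')).card := by
  classical
  rw [incl]
  have h1 : H.edges.filter (fun e => 2 ≤ e.card ∧ ∃ e' ∈ H.edges, e ⊂ e') =
      H.edges.filter (fun e => ∃ e' ∈ H.edges, e ⊂ e') := by
    apply Multiset.filter_congr
    intro e he
    exact ⟨fun h => h.2, fun h => ⟨hs.2 e he, h⟩⟩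
  rw [h1, card_multiset_filter hs]

open Classical in
lemma sum_udeg_eq (hs : Simple H) :
    ∑ S ∈ IH H, udeg H S = (Qset H).card + incl H := by
  classical
  have h1 : ∑ S ∈ IH H, udeg H S =
      ∑ e ∈ H.edges.toFinset, ((IH H).filter (fun S => S ⊆ e)).card := by
    simp_rw [udeg_eq hs, Finset.card_filter]
    exact Finset.sum_comm
  rw [h1, card_Qset hs, incl_eq hs, Finset.card_filter, ← Finset.sum_add_distrib]
  refine Finset.sum_congr rfl fun e he => ?_
  have heE := Multiset.mem_toFinset.mp he
  rw [card_filter_subset_IH heE (hs.2 e heE)]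

end Aux3

section Traces
variable {H : Hypergraph' V}

lemma count_singleton_zero (hs : Simple H) {S : Finset V} (h1 : S.card = 1) :
    H.edges.count S = 0 := by
  rw [Multiset.count_eq_zero]
  intro hmem
  have := hs.2 S hmem
  omega

lemma trace_U (hs : Simple H) : (U H).trace = 0 := by
  rw [Matrix.trace]
  refine Finset.sum_eq_zero fun S _ => ?_
  by_cases h : (S : Finset V).card = 1
  · simp [Matrix.diag_apply, U, count_singleton_zero hs h]
  · simp [Matrix.diag_apply, U, h]

open Classical in
lemma U_mul_self_apply (hs : Simple H) (S T : ↥(IH H)) :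
    U H S T * U H T S =
      (if (S : Finset V) ≠ (T : Finset V) ∧ Disjoint (S : Finset V) (T : Finset V) ∧
          (S : Finset V) ∪ (T : Finset V) ∈ H.edges then (1 : ℝ) else 0) := by
  by_cases h1 : (S : Finset V) = (T : Finset V)
  · rw [if_neg (by simp [h1])]
    have hz : U H S T = 0 := by
      by_cases h : (S : Finset V).card = 1
      · simp [U, h1, count_singleton_zero hs (h1 ▸ h)]
      · simp [U, h1, h1 ▸ h]
    rw [hz, zero_mul]
  · by_cases h2 : Disjoint (S : Finset V) (T : Finset V)
    · simp only [U, if_neg h1, if_neg (Ne.symm h1), if_pos h2, if_pos h2.symm,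
        Finset.union_comm (T : Finset V) (S : Finset V)]
      by_cases h3 : (S : Finset V) ∪ (T : Finset V) ∈ H.edges
      · rw [if_pos ⟨h1, h2, h3⟩, Multiset.count_eq_one_of_mem hs.1 h3]
        norm_num
      · rw [Multiset.count_eq_zero.mpr h3, if_neg (by tauto), Nat.cast_zero, zero_mul]
    · simp only [U, if_neg h1, if_neg (Ne.symm h1), if_neg h2,
        if_neg (fun h : Disjoint (T : Finset V) (S : Finset V) => h2 h.symm)]
      rw [zero_mul, if_neg (by tauto)]

open Classical in
lemma trace_U_sq (hs : Simple H) : (U H * U H).trace = ((Qset H).card : ℝ) := by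
  classical
  have key := U_mul_self_apply hs
  rw [Matrix.trace]
  simp only [Matrix.diag_apply, Matrix.mul_apply]
  calc ∑ S : ↥(IH H), ∑ T : ↥(IH H), U H S T * U H T S
      = ∑ S : ↥(IH H), ∑ T : ↥(IH H),
          (if (S : Finset V) ≠ (T : Finset V) ∧ Disjoint (S : Finset V) (T : Finset V) ∧
            (S : Finset V) ∪ (T : Finset V) ∈ H.edges then (1 : ℝ) else 0) := by
        exact Finset.sum_congr rfl fun S _ => Finset.sum_congr rfl fun T _ => key S T
    _ = ∑ S ∈ IH H, ∑ T ∈ IH H,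
          (if S ≠ T ∧ Disjoint S T ∧ S ∪ T ∈ H.edges then (1 : ℝ) else 0) := by
        rw [← Finset.sum_coe_sort (IH H)
          (fun S => ∑ T ∈ IH H, (if S ≠ T ∧ Disjoint S T ∧ S ∪ T ∈ H.edges then (1 : ℝ) else 0))]
        exact Finset.sum_congr rfl fun S _ => Finset.sum_coe_sort (IH H)
          (fun T => if (↑S : Finset V) ≠ T ∧ Disjoint (↑S : Finset V) T ∧
            (↑S : Finset V) ∪ T ∈ H.edges then (1 : ℝ) else 0)
    _ = ∑ p ∈ (IH H) ×ˢ (IH H),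
          (if p.1 ≠ p.2 ∧ Disjoint p.1 p.2 ∧ p.1 ∪ p.2 ∈ H.edges then (1 : ℝ) else 0) := by
        rw [← Finset.sum_product']
    _ = ((Qset H).card : ℝ) := by
        rw [Qset, Finset.sum_boole]

end Traces
section Spectral
open Matrix
variable {n : Type} [Fintype n] [DecidableEq n] {A : Matrix n n ℝ}

lemma trace_eq_sum_eig (hA : A.IsHermitian) : A.trace = ∑ i, hA.eigenvalues i := by
  conv_lhs => rw [hA.spectral_theorem, Unitary.conjStarAlgAut_apply]
  rw [Matrix.trace_mul_cycle, (Matrix.mem_unitaryGroup_iff').mp (Matrix.IsHermitian.eigenvectorUnitary hA).2, Matrix.one_mul, Matrix.trace_diagonal]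
  simp

lemma trace_sq_eq_sum_eig (hA : A.IsHermitian) :
    (A * A).trace = ∑ i, hA.eigenvalues i ^ 2 := by
  set W : Matrix n n ℝ := ↑(Matrix.IsHermitian.eigenvectorUnitary hA) with hW
  set D : Matrix n n ℝ := diagonal (RCLike.ofReal ∘ hA.eigenvalues) with hD
  have h1 : star W * W = 1 := (Matrix.mem_unitaryGroup_iff').mp (Matrix.IsHermitian.eigenvectorUnitary hA).2
  conv_lhs => rw [hA.spectral_theorem, Unitary.conjStarAlgAut_apply, ← hW, ← hD]
  rw [Matrix.mul_assoc (W * D) (star W) (W * D * star W), ← Matrix.mul_assoc (star W) (W * D) (star W),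
    ← Matrix.mul_assoc (star W) W D, h1, Matrix.one_mul, ← Matrix.mul_assoc,
    Matrix.trace_mul_cycle, ← Matrix.mul_assoc (star W) W D, h1, Matrix.one_mul, hD,
    Matrix.diagonal_mul_diagonal, Matrix.trace_diagonal]
  simp [sq]

end Spectral

theorem lambda_one_sq_le (H : Hypergraph' V) (hs : Simple H) (hU : (U H).IsHermitian)
    (i₀ : ↥(IH H)) (hmax : ∀ i, hU.eigenvalues i ≤ hU.eigenvalues i₀) :
    (hU.eigenvalues i₀) ^ 2 ≤
      (((Fintype.card ↥(IH H) : ℝ) - 1) / (Fintype.card ↥(IH H) : ℝ)) *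
        ((∑ S ∈ IH H, (udeg H S : ℝ)) - (incl H : ℝ)) := by
  classical
  set lam := hU.eigenvalues with hlam
  set k := Fintype.card ↥(IH H) with hk
  have hk1 : 1 ≤ k := Fintype.card_pos_iff.mpr ⟨i₀⟩
  have hkR : (0 : ℝ) < (k : ℝ) := by exact_mod_cast Nat.pos_of_ne_zero (by omega)
  have h0 : ∑ i, lam i = 0 := by rw [← trace_eq_sum_eig hU, trace_U hs]
  set t : ℝ := (∑ S ∈ IH H, (udeg H S : ℝ)) - (incl H : ℝ) with ht
  have hQt : ((Qset H).card : ℝ) = t := by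
    have := sum_udeg_eq hs
    have h' : ((∑ S ∈ IH H, udeg H S : ℕ) : ℝ) = ((Qset H).card : ℝ) + (incl H : ℝ) := by
      exact_mod_cast congrArg (fun n : ℕ => (n : ℝ)) this
    rw [Nat.cast_sum] at h'
    rw [ht]; linarith
  have hsq : ∑ i, lam i ^ 2 = t := by
    rw [← trace_sq_eq_sum_eig hU, trace_U_sq hs, hQt]
  have hadd := Finset.add_sum_erase Finset.univ lam (Finset.mem_univ i₀)
  have hadd2 := Finset.add_sum_erase Finset.univ (fun i => lam i ^ 2) (Finset.mem_univ i₀)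
  have h1 : ∑ i ∈ Finset.univ.erase i₀, lam i = - lam i₀ := by
    rw [← hadd] at h0
    linarith
  have hcs : (∑ i ∈ Finset.univ.erase i₀, lam i) ^ 2 ≤
      ((Finset.univ.erase i₀).card : ℝ) * ∑ i ∈ Finset.univ.erase i₀, lam i ^ 2 :=
    sq_sum_le_card_mul_sum_sq
  have hcard : ((Finset.univ.erase i₀).card : ℝ) = (k : ℝ) - 1 := by
    rw [Finset.card_erase_of_mem (Finset.mem_univ i₀), Finset.card_univ, ← hk]
    have : (1:ℕ) ≤ k := hk1
    push_cast [Nat.cast_sub this]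
    ring
  have herase : ∑ i ∈ Finset.univ.erase i₀, lam i ^ 2 = t - lam i₀ ^ 2 := by
    rw [← hsq, ← hadd2]; ring
  rw [h1, neg_sq, hcard, herase] at hcs
  rw [div_mul_eq_mul_div, le_div_iff₀ hkR]
  nlinarith [hcs]
end
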